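/- Let T : M_n(ℂ) → M_n(ℂ) be a positive linear map that is Lamperti (for positive semidefinite x, y with xy = 0 one has (Tx)(Ty) = 0). Then for every Hermitian matrix x, one has |T x| = T(|x|). -/

import Mathlib

open ComplexOrder

/-- The absolute value `|x| = (xᴴ x)^{1/2}` of a complex matrix. -/
noncomputable def matAbs {n : ℕ} (x : Matrix (Fin n) (Fin n) ℂ) : Matrix (Fin n) (Fin n) ℂ :=
  (Matrix.posSemidef_conjTranspose_mul_self x).1.eigenvectorUnitary.1 *
    Matrix.diagonal (((↑) : ℝ → ℂ) ∘ (Real.sqrt ·) ∘ (Matrix.posSemidef_conjTranspose_mul_self x).1.eigenvalues) *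
    (star (Matrix.posSemidef_conjTranspose_mul_self x).1.eigenvectorUnitary : Matrix (Fin n) (Fin n) ℂ)

/-- If `y = p - q` with `p, q` PSD and `pq = qp = 0`, then `|y| = p + q`. -/
lemma matAbs_of_decomp {n : ℕ} {y p q : Matrix (Fin n) (Fin n) ℂ}
    (hy : y.IsHermitian) (hp : p.PosSemidef) (hq : q.PosSemidef)
    (hsub : p - q = y) (hpq : p * q = 0) (hqp : q * p = 0) :
    matAbs y = p + q := by
  have h1 : matAbs y = cfc Real.sqrt (y.conjTranspose * y) := by
    rw [(Matrix.posSemidef_conjTranspose_mul_self y).1.cfc_eq]; rfl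
  have hyy : y.conjTranspose * y = (p + q) * (p + q) := by
    rw [hy.eq, ← hsub]
    simp only [Matrix.add_mul, Matrix.mul_add, Matrix.sub_mul, Matrix.mul_sub, hpq, hqp]
    abel
  have hpq' := hp.add hq
  have hs : IsSelfAdjoint (p + q) := hpq'.isHermitian
  rw [h1, hyy]
  calc cfc Real.sqrt ((p + q) * (p + q))
      = cfc Real.sqrt (cfc (fun t : ℝ => t * t) (p + q)) := by
        rw [cfc_mul (fun t : ℝ => t) (fun t : ℝ => t) (p + q), cfc_id' ℝ (p + q)]
    _ = cfc (Real.sqrt ∘ fun t : ℝ => t * t) (p + q) := (cfc_comp Real.sqrt _ (p + q)).symm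
    _ = cfc (fun t : ℝ => t) (p + q) := by
        refine cfc_congr fun t ht => ?_
        rw [hpq'.isHermitian.spectrum_real_eq_range_eigenvalues] at ht
        obtain ⟨i, rfl⟩ := ht
        exact Real.sqrt_mul_self (hpq'.eigenvalues_nonneg i)
    _ = p + q := cfc_id' ℝ (p + q)

/-- `cfc` of a nonnegative function of a Hermitian matrix is positive semidefinite. -/
lemma cfc_posSemidef {n : ℕ} {x : Matrix (Fin n) (Fin n) ℂ} (hx : x.IsHermitian)
    (f : ℝ → ℝ) (hf : ∀ t, 0 ≤ f t) : (cfc f x).PosSemidef := by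
  rw [hx.cfc_eq, Matrix.IsHermitian.cfc]
  rw [Unitary.conjStarAlgAut_apply, Matrix.star_eq_conjTranspose]
  refine Matrix.PosSemidef.mul_mul_conjTranspose_same ?_ _
  refine Matrix.PosSemidef.diagonal fun i => ?_
  exact Complex.zero_le_real.2 (hf _)

/-- If `T` is a positive Lamperti map on `Mₙ(ℂ)`, then `|T x| = T |x|` for every
Hermitian matrix `x`. -/
theorem abs_map_eq_map_abs_of_lamperti {n : ℕ}
    (T : Matrix (Fin n) (Fin n) ℂ →ₗ[ℂ] Matrix (Fin n) (Fin n) ℂ)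
    (hTpos : ∀ x : Matrix (Fin n) (Fin n) ℂ, x.PosSemidef → (T x).PosSemidef)
    (hTlam : ∀ x y : Matrix (Fin n) (Fin n) ℂ,
      x.PosSemidef → y.PosSemidef → x * y = 0 → T x * T y = 0)
    (x : Matrix (Fin n) (Fin n) ℂ) (hx : x.IsHermitian) :
    matAbs (T x) = T (matAbs x) := by
  have hsa : IsSelfAdjoint x := hx
  have hcp : Continuous (fun t : ℝ => t⁺) := by fun_prop
  have hcq : Continuous (fun t : ℝ => t⁻) := by fun_prop
  set p := cfc (fun t : ℝ => t⁺) x with hpdef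
  set q := cfc (fun t : ℝ => t⁻) x with hqdef
  have hppsd : p.PosSemidef := cfc_posSemidef hx _ fun t => posPart_nonneg t
  have hqpsd : q.PosSemidef := cfc_posSemidef hx _ fun t => negPart_nonneg t
  have hzero : ∀ t : ℝ, t⁺ * t⁻ = 0 := by
    intro t
    rcases le_total t 0 with h | h
    · simp [posPart_eq_zero.2 h]
    · simp [negPart_eq_zero.2 h]
  have hpq : p * q = 0 := by
    rw [hpdef, hqdef, ← cfc_mul _ _ x hcp.continuousOn hcq.continuousOn]
    simp only [hzero]
    exact cfc_const_zero ℝ x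
  have hqp : q * p = 0 := by
    have := congrArg Matrix.conjTranspose hpq
    simpa [Matrix.conjTranspose_mul, hppsd.isHermitian.eq, hqpsd.isHermitian.eq] using this
  have hsub : p - q = x := by
    rw [hpdef, hqdef, ← cfc_sub _ _ x hcp.continuousOn hcq.continuousOn]
    simp only [posPart_sub_negPart]
    exact cfc_id ℝ x
  have habs : matAbs x = p + q := matAbs_of_decomp hx hppsd hqpsd hsub hpq hqp
  have hTp : (T p).PosSemidef := hTpos p hppsd
  have hTq : (T q).PosSemidef := hTpos q hqpsd
  have hTpq : T p * T q = 0 := hTlam p q hppsd hqpsd hpq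
  have hTqp : T q * T p = 0 := by
    have := congrArg Matrix.conjTranspose hTpq
    simpa [Matrix.conjTranspose_mul, hTp.isHermitian.eq, hTq.isHermitian.eq] using this
  have hTsub : T p - T q = T x := by rw [← map_sub, hsub]
  have hTxherm : (T x).IsHermitian := by
    rw [← hTsub]; exact hTp.isHermitian.sub hTq.isHermitian
  rw [matAbs_of_decomp hTxherm hTp hTq hTsub hTpq hTqp, habs, map_add]
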